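/- Let Φ : 𝔽_q[X,Y] → 𝔽_q(t) be the 𝔽_q-algebra homomorphism determined by Φ(X) = 1/π and Φ(Y) = t/π. Then the kernel of Φ is the principal ideal generated by ρ(X,Y) = Y² − Tr(ζ)·XY + ζ^{q+1}·X² − X, and the image of Φ is exactly the set of rational functions of the form F(t)/π^d with F ∈ 𝔽_q[t], d ≥ 0 and deg F ≤ 2d. In particular the coordinate ring 𝒜 of the π-truncated projective line is isomorphic as an 𝔽_q-algebra to 𝔽_q[X,Y]/(ρ(X,Y)). -/

import Mathlib

section Aux

open Polynomial

variable {Fq : Type*} [Field Fq]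

theorem aux_monic (a b : Fq) : (X ^ 2 - C a * X + C b : Fq[X]).Monic := by
  have h : (X ^ 2 - C a * X + C b : Fq[X]) = X ^ 2 + (-(C a * X) + C b) := by ring
  rw [h]
  apply monic_X_pow_add
  refine lt_of_le_of_lt ?_ (show ((1:ℕ) : WithBot ℕ) < 2 by norm_cast)
  have : (-(C a * X) + C b : Fq[X]) = C (-a) * X + C b := by simp [map_neg]
  rw [this]; exact degree_linear_le

theorem aux_natDegree (a b : Fq) : (X ^ 2 - C a * X + C b : Fq[X]).natDegree = 2 := by
  have h : (X ^ 2 - C a * X + C b : Fq[X]) = C 1 * X ^ 2 + C (-a) * X + C b := by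
    simp [map_neg]; ring
  rw [h, natDegree_quadratic one_ne_zero]

theorem auxM {π : Fq[X]} (hm : π.Monic) (g : Fq[X]) (N : ℕ) (hg : g.natDegree ≤ N) :
    Polynomial.aeval ((algebraMap Fq[X] (RatFunc Fq) π)⁻¹) g
        * (algebraMap Fq[X] (RatFunc Fq) π) ^ N
      = algebraMap Fq[X] (RatFunc Fq) ((reflect N g).comp π) := by
  set πR := algebraMap Fq[X] (RatFunc Fq) π with hπR
  have hπR0 : πR ≠ 0 := RatFunc.algebraMap_ne_zero hm.ne_zero
  have : Invertible πR := invertibleOfNonzero hπR0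
  have h1 : (reflect N g).natDegree ≤ N := by
    rw [natDegree_le_iff_coeff_eq_zero]
    intro i hi
    rw [coeff_reflect, revAt_eq_self_of_lt hi]
    exact coeff_eq_zero_of_natDegree_lt (lt_of_le_of_lt hg hi)
  have h2 := eval₂_reflect_mul_pow (algebraMap Fq (RatFunc Fq)) πR N (reflect N g) h1
  have h3 : reflect N (reflect N g) = g := by
    ext i
    rw [coeff_reflect, coeff_reflect, revAt_invol]
  rw [h3] at h2
  rw [invOf_eq_inv] at h2
  rw [aeval_def, h2]
  rw [show (algebraMap Fq (RatFunc Fq)) = (algebraMap Fq[X] (RatFunc Fq)).comp (C : Fq →+* Fq[X])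
       from by ext c; simp [RatFunc.algebraMap_C]]
  rw [comp, ← hom_eval₂]


theorem auxKey {π : Fq[X]} (hm : π.Monic) (hd : π.natDegree = 2) (g h : Fq[X])
    (heq : Polynomial.aeval ((algebraMap Fq[X] (RatFunc Fq) π)⁻¹) g
      + Polynomial.aeval ((algebraMap Fq[X] (RatFunc Fq) π)⁻¹) h
        * (RatFunc.X * (algebraMap Fq[X] (RatFunc Fq) π)⁻¹) = 0) :
    g = 0 ∧ h = 0 := by
  set πR := algebraMap Fq[X] (RatFunc Fq) π with hπR
  have hπR0 : πR ≠ 0 := RatFunc.algebraMap_ne_zero hm.ne_zero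
  set N := max g.natDegree h.natDegree with hN
  set G : Fq[X] := (reflect N g).comp π with hG
  set H : Fq[X] := (reflect N h).comp π with hH
  have hπC : ¬ (π = C (π.coeff 0)) := by
    intro hc
    have := natDegree_C (π.coeff 0)
    rw [← hc, hd] at this; exact two_ne_zero this
  have hGiff : G = 0 ↔ g = 0 := by
    rw [hG, comp_eq_zero_iff]
    constructor
    · rintro (h1 | ⟨-, h2⟩)
      · exact reflect_eq_zero_iff.mp h1
      · exact absurd h2 hπC
    · intro h1; left; rw [h1, reflect_zero]
  have hHiff : H = 0 ↔ h = 0 := by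
    rw [hH, comp_eq_zero_iff]
    constructor
    · rintro (h1 | ⟨-, h2⟩)
      · exact reflect_eq_zero_iff.mp h1
      · exact absurd h2 hπC
    · intro h1; left; rw [h1, reflect_zero]
  set xx := πR⁻¹ with hxx
  have e1 := auxM (Fq := Fq) hm g N (le_max_left _ _)
  have e2 := auxM (Fq := Fq) hm h N (le_max_right _ _)
  -- main polynomial identity: G * π + H * X = 0
  have hmain : G * π + H * Polynomial.X = 0 := by
    have key : algebraMap Fq[X] (RatFunc Fq) (G * π + H * Polynomial.X)
        = (Polynomial.aeval xx g + Polynomial.aeval xx h * (RatFunc.X * xx)) * πR ^ (N + 1) := by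
      rw [map_add, map_mul, map_mul, ← e1, ← e2, RatFunc.algebraMap_X, pow_succ]
      have hxπ : xx * πR = 1 := inv_mul_cancel₀ hπR0
      linear_combination (-(Polynomial.aeval xx h * πR ^ N * RatFunc.X)) * hxπ
    rw [heq, zero_mul, ← map_zero (algebraMap Fq[X] (RatFunc Fq))] at key
    exact RatFunc.algebraMap_injective Fq key
  have hπ0 : π ≠ 0 := hm.ne_zero
  have hh : h = 0 := by
    by_cases hG0 : G = 0
    · rw [hG0, zero_mul, zero_add, mul_eq_zero] at hmain
      rcases hmain with h1 | h1
      · exact hHiff.mp h1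
      · exact absurd h1 X_ne_zero
    · exfalso
      have hH0 : H ≠ 0 := by
        intro e
        rw [e, zero_mul, add_zero, mul_eq_zero] at hmain
        rcases hmain with h1 | h1
        · exact hG0 h1
        · exact hπ0 h1
      have hGm : G * π = -(H * Polynomial.X) := by linear_combination hmain
      have hdeg := congrArg natDegree hGm
      rw [natDegree_neg, natDegree_mul hG0 hπ0, natDegree_mul hH0 X_ne_zero, hd,
        natDegree_X] at hdeg
      have p1 : G.natDegree = (reflect N g).natDegree * 2 := by rw [hG, natDegree_comp, hd]
      have p2 : H.natDegree = (reflect N h).natDegree * 2 := by rw [hH, natDegree_comp, hd]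
      omega
  refine ⟨?_, hh⟩
  have hH0 : H = 0 := hHiff.mpr hh
  rw [hH0, zero_mul, add_zero, mul_eq_zero] at hmain
  rcases hmain with h1 | h1
  · exact hGiff.mp h1
  · exact absurd h1 hπ0


theorem auxKer (a b : Fq) :
    RingHom.ker ((MvPolynomial.aeval
        ![((algebraMap Fq[X] (RatFunc Fq)) (X ^ 2 - C a * X + C b))⁻¹,
          RatFunc.X * ((algebraMap Fq[X] (RatFunc Fq)) (X ^ 2 - C a * X + C b))⁻¹] :
        MvPolynomial (Fin 2) Fq →ₐ[Fq] RatFunc Fq) : MvPolynomial (Fin 2) Fq →+* RatFunc Fq)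
      = Ideal.span {MvPolynomial.X 1 ^ 2
          - MvPolynomial.C a * MvPolynomial.X 0 * MvPolynomial.X 1
          + MvPolynomial.C b * MvPolynomial.X 0 ^ 2 - MvPolynomial.X 0} := by
  set π : Fq[X] := X ^ 2 - C a * X + C b with hπ
  have hm : π.Monic := aux_monic a b
  have hd : π.natDegree = 2 := aux_natDegree a b
  set πR : RatFunc Fq := (algebraMap Fq[X] (RatFunc Fq)) π with hπRdef
  have hπR0 : πR ≠ 0 := RatFunc.algebraMap_ne_zero hm.ne_zero
  set xx : RatFunc Fq := πR⁻¹ with hxx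
  set yy : RatFunc Fq := RatFunc.X * xx with hyy
  set Φ : MvPolynomial (Fin 2) Fq →ₐ[Fq] RatFunc Fq := MvPolynomial.aeval ![xx, yy] with hΦdef
  set ρ : MvPolynomial (Fin 2) Fq := MvPolynomial.X 1 ^ 2
      - MvPolynomial.C a * MvPolynomial.X 0 * MvPolynomial.X 1
      + MvPolynomial.C b * MvPolynomial.X 0 ^ 2 - MvPolynomial.X 0 with hρdef
  set Ψ : Polynomial (Polynomial Fq) →ₐ[Fq] RatFunc Fq :=
    ((Polynomial.aeval yy).restrictScalars Fq).comp
      (Polynomial.mapAlgHom (Polynomial.aeval xx)) with hΨdef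
  set θ : MvPolynomial (Fin 2) Fq →ₐ[Fq] Polynomial (Polynomial Fq) :=
    MvPolynomial.aeval ![Polynomial.C Polynomial.X, Polynomial.X] with hθdef
  set θ' : Polynomial (Polynomial Fq) →ₐ[Fq] MvPolynomial (Fin 2) Fq :=
    ((Polynomial.aeval (MvPolynomial.X 1 : MvPolynomial (Fin 2) Fq)).restrictScalars Fq).comp
      (Polynomial.mapAlgHom (Polynomial.aeval (MvPolynomial.X 0 : MvPolynomial (Fin 2) Fq))) with hθ'def
  have hθ'θ : ∀ p, θ' (θ p) = p := by
    have hcomp : θ'.comp θ = AlgHom.id Fq _ := by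
      apply MvPolynomial.algHom_ext
      intro i
      fin_cases i <;> simp [hθdef, hθ'def, AlgHom.restrictScalars_apply]
    intro p
    calc θ' (θ p) = (θ'.comp θ) p := rfl
      _ = p := by rw [hcomp]; rfl
  have hΦΨθ : ∀ p, Φ p = Ψ (θ p) := by
    have hcomp : Φ = Ψ.comp θ := by
      apply MvPolynomial.algHom_ext
      intro i
      fin_cases i <;> simp [hΦdef, hθdef, hΨdef, AlgHom.restrictScalars_apply]
    intro p; rw [hcomp]; rfl
  set ρ'' : Polynomial (Polynomial Fq) := Polynomial.X ^ 2
      - Polynomial.C (Polynomial.C a * Polynomial.X) * Polynomial.X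
      + Polynomial.C (Polynomial.C b * Polynomial.X ^ 2 - Polynomial.X) with hρ''def
  have hρ''m : ρ''.Monic := by
    have h : ρ'' = Polynomial.X ^ 2 + (C (-(Polynomial.C a * Polynomial.X)) * Polynomial.X
        + C (Polynomial.C b * Polynomial.X ^ 2 - Polynomial.X)) := by
      rw [hρ''def, map_neg]; ring
    rw [h]
    apply monic_X_pow_add
    refine lt_of_le_of_lt degree_linear_le (by norm_cast)
  have hρ''d : ρ''.natDegree = 2 := by
    have h : ρ'' = C (1 : Fq[X]) * Polynomial.X ^ 2 + C (-(Polynomial.C a * Polynomial.X)) *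
        Polynomial.X + C (Polynomial.C b * Polynomial.X ^ 2 - Polynomial.X) := by
      rw [hρ''def, map_neg, map_one]; ring
    rw [h, natDegree_quadratic one_ne_zero]
  have hθρ : θ ρ = ρ'' := by
    rw [hρdef, hρ''def]
    simp [hθdef]
    try ring
  have hθ'ρ'' : θ' ρ'' = ρ := by
    rw [← hθρ, hθ'θ]
  have hπRX : πR = RatFunc.X ^ 2 - (algebraMap Fq (RatFunc Fq) a) * RatFunc.X
      + algebraMap Fq (RatFunc Fq) b := by
    simp [hπRdef, hπ, map_add, map_sub, map_pow, map_mul, RatFunc.algebraMap_X,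
      RatFunc.algebraMap_C, RatFunc.algebraMap_eq_C]
  have hΨρ'' : Ψ ρ'' = 0 := by
    have hexp : Ψ ρ'' = yy ^ 2 - (algebraMap Fq (RatFunc Fq) a) * xx * yy
        + ((algebraMap Fq (RatFunc Fq) b) * xx ^ 2 - xx) := by
      rw [hρ''def]
      simp [hΨdef, Polynomial.aeval_C, AlgHom.restrictScalars_apply]
      try ring
    have h1 : xx * πR = 1 := inv_mul_cancel₀ hπR0
    rw [hexp, hyy]
    linear_combination xx * h1 - xx ^ 2 * hπRX
  have hΦρ : Φ ρ = 0 := by rw [hΦΨθ, hθρ, hΨρ'']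
  apply le_antisymm
  · intro p hp
    have hΦp : Φ p = 0 := hp
    have hΨθp : Ψ (θ p) = 0 := by rw [← hΦΨθ, hΦp]
    set r : Polynomial (Polynomial Fq) := θ p %ₘ ρ'' with hrdef
    have hdegr : r.degree < 2 := by
      have h := degree_modByMonic_lt (θ p) hρ''m
      rwa [degree_eq_natDegree hρ''m.ne_zero, hρ''d] at h
    have hr1 : r.degree ≤ 1 := by
      by_cases hr0 : r = 0
      · simp [hr0]
      · rw [degree_eq_natDegree hr0] at hdegr ⊢
        exact_mod_cast Nat.lt_succ_iff.mp (by exact_mod_cast hdegr)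
    have hΨr : Ψ r = 0 := by
      have h := modByMonic_add_div (θ p) ρ''
      have h2 : Ψ r + Ψ ρ'' * Ψ (θ p /ₘ ρ'') = Ψ (θ p) := by
        rw [← map_mul, ← map_add, h]
      rw [hΨρ'', zero_mul, add_zero, hΨθp] at h2
      exact h2
    have hrX : r = C (r.coeff 1) * Polynomial.X + C (r.coeff 0) :=
      eq_X_add_C_of_degree_le_one hr1
    have hΨrval : Polynomial.aeval xx (r.coeff 1) * yy + Polynomial.aeval xx (r.coeff 0) = 0 := by
      rw [← hΨr]




      conv_rhs => rw [hrX]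
      simp [hΨdef, Polynomial.aeval_C]
    have hkey := auxKey hm hd (r.coeff 0) (r.coeff 1)
      (by rw [← hxx, ← hyy]; linear_combination hΨrval)
    have hr0 : r = 0 := by rw [hrX, hkey.1, hkey.2]; simp
    set Q : Polynomial (Polynomial Fq) := θ p /ₘ ρ'' with hQdef
    have hfact : θ p = ρ'' * Q := by
      have h := modByMonic_add_div (θ p) ρ''
      rw [← h, ← hrdef, hr0, zero_add]
    have : p = ρ * θ' Q := by
      conv_lhs => rw [← hθ'θ p, hfact]
      rw [map_mul, hθ'ρ'']
    exact Ideal.mem_span_singleton.mpr ⟨_, this⟩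
  · rw [Ideal.span_le, Set.singleton_subset_iff]
    exact hΦρ


theorem auxMem {π : Fq[X]} (hm : π.Monic) (hd : π.natDegree = 2) :
    ∀ (k : ℕ) (F : Fq[X]) (d : ℕ), F.natDegree ≤ k → F.natDegree ≤ 2 * d →
      (algebraMap Fq[X] (RatFunc Fq)) F / (algebraMap Fq[X] (RatFunc Fq) π) ^ d ∈
        Set.range (MvPolynomial.aeval
          ![((algebraMap Fq[X] (RatFunc Fq)) π)⁻¹,
            RatFunc.X * ((algebraMap Fq[X] (RatFunc Fq)) π)⁻¹] :
          MvPolynomial (Fin 2) Fq →ₐ[Fq] RatFunc Fq) := by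
  set πR : RatFunc Fq := (algebraMap Fq[X] (RatFunc Fq)) π with hπRdef
  have hπR0 : πR ≠ 0 := RatFunc.algebraMap_ne_zero hm.ne_zero
  set xx : RatFunc Fq := πR⁻¹ with hxx
  set Φ : MvPolynomial (Fin 2) Fq →ₐ[Fq] RatFunc Fq :=
    MvPolynomial.aeval ![xx, RatFunc.X * xx] with hΦdef
  have hΦ0 : ∀ n : ℕ, Φ (MvPolynomial.X 0 ^ n) = xx ^ n := by
    intro n; simp [hΦdef]
  intro k
  induction k using Nat.strong_induction_on with
  | _ k IH =>
    intro F d hFk hFd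
    by_cases hF0 : F = 0
    · exact ⟨0, by simp [hF0]⟩
    set kk := F.natDegree with hkk
    have hmod : kk % 2 + 2 * (kk / 2) = kk := by omega
    set v : Fq[X] := X ^ (kk % 2) * π ^ (kk / 2) with hv
    have hvm : v.Monic := (monic_X_pow _).mul (hm.pow _)
    have hvd : v.natDegree = kk := by
      rw [hv, natDegree_mul (monic_X_pow _).ne_zero (hm.pow _).ne_zero,
        natDegree_X_pow, natDegree_pow, hd]
      omega
    set lc := F.leadingCoeff with hlc
    have hlc0 : lc ≠ 0 := leadingCoeff_ne_zero.mpr hF0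
    set F' : Fq[X] := F - C lc * v with hF'
    have hClcv0 : C lc * v ≠ 0 := mul_ne_zero (by simpa using hlc0) hvm.ne_zero
    have hdegCv : (C lc * v).natDegree = kk := by
      rw [natDegree_mul (by simpa using hlc0) hvm.ne_zero, natDegree_C, hvd]; omega
    have hsub : F'.degree < F.degree := by
      apply degree_sub_lt
      · rw [degree_eq_natDegree hF0, degree_eq_natDegree hClcv0, hdegCv]
      · exact hF0
      · rw [leadingCoeff_mul, leadingCoeff_C, hvm.leadingCoeff, mul_one]
    have hmem1 : (algebraMap Fq[X] (RatFunc Fq)) F' / πR ^ d ∈ Set.range Φ := by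
      by_cases hF'0 : F' = 0
      · exact ⟨0, by simp [hF'0]⟩
      · have h1 : F'.natDegree < kk := natDegree_lt_natDegree hF'0 hsub
        exact IH F'.natDegree (lt_of_lt_of_le h1 hFk) F' d le_rfl (le_trans h1.le hFd)
    have hmem2 : (algebraMap Fq[X] (RatFunc Fq)) (C lc * v) / πR ^ d ∈ Set.range Φ := by
      rcases Nat.mod_two_eq_zero_or_one kk with he | he
      · refine ⟨MvPolynomial.C lc * MvPolynomial.X 0 ^ (d - kk / 2), ?_⟩
        have hdd : kk / 2 ≤ d := by omega
        have hsplit : πR ^ d = πR ^ (kk / 2) * πR ^ (d - kk / 2) := by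
          rw [← pow_add]; congr 1; omega
        have hval : Φ (MvPolynomial.C lc * MvPolynomial.X 0 ^ (d - kk / 2))
            = algebraMap Fq (RatFunc Fq) lc * xx ^ (d - kk / 2) := by
          simp [hΦdef]
        rw [hval, hv, he, pow_zero, one_mul, map_mul, map_pow, hsplit,
          RatFunc.algebraMap_C, ← RatFunc.algebraMap_eq_C, hxx, inv_pow]
        rw [eq_div_iff (by simp [pow_ne_zero _ hπR0, hπR0]
          : πR ^ (kk / 2) * πR ^ (d - kk / 2) ≠ 0)]
        field_simp
        rw [← hπRdef]
        try ring
      · refine ⟨MvPolynomial.C lc * MvPolynomial.X 0 ^ (d - kk / 2 - 1) * MvPolynomial.X 1, ?_⟩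
        have hdd : kk / 2 + 1 ≤ d := by omega
        have hsplit : πR ^ d = πR ^ (kk / 2) * (πR ^ (d - kk / 2 - 1) * πR) := by
          rw [← pow_succ, ← pow_add]; congr 1; omega
        have hval : Φ (MvPolynomial.C lc * MvPolynomial.X 0 ^ (d - kk / 2 - 1)
              * MvPolynomial.X 1)
            = algebraMap Fq (RatFunc Fq) lc * xx ^ (d - kk / 2 - 1) * (RatFunc.X * xx) := by
          simp [hΦdef]
        rw [hval, hv, he, pow_one, map_mul, map_mul, map_pow, RatFunc.algebraMap_C,
          ← RatFunc.algebraMap_eq_C, RatFunc.algebraMap_X, hsplit, hxx, inv_pow]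
        rw [eq_div_iff (by simp [pow_ne_zero _ hπR0, hπR0])]
        field_simp
        rw [← hπRdef]
        try ring
    obtain ⟨p1, hp1⟩ := hmem1
    obtain ⟨p2, hp2⟩ := hmem2
    refine ⟨p1 + p2, ?_⟩
    rw [map_add, hp1, hp2, ← add_div, ← map_add]
    congr 2
    rw [hF']; ring


theorem auxRange {π : Fq[X]} (hm : π.Monic) (hd : π.natDegree = 2) :
    Set.range (MvPolynomial.aeval
        ![((algebraMap Fq[X] (RatFunc Fq)) π)⁻¹,
          RatFunc.X * ((algebraMap Fq[X] (RatFunc Fq)) π)⁻¹] :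
        MvPolynomial (Fin 2) Fq →ₐ[Fq] RatFunc Fq)
      = {u : RatFunc Fq | ∃ (P : Fq[X]) (d : ℕ), P.natDegree ≤ 2 * d ∧
          u = algebraMap Fq[X] (RatFunc Fq) P / algebraMap Fq[X] (RatFunc Fq) π ^ d} := by
  set πR : RatFunc Fq := (algebraMap Fq[X] (RatFunc Fq)) π with hπRdef
  have hπR0 : πR ≠ 0 := RatFunc.algebraMap_ne_zero hm.ne_zero
  set xx : RatFunc Fq := πR⁻¹ with hxx
  set Φ : MvPolynomial (Fin 2) Fq →ₐ[Fq] RatFunc Fq :=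
    MvPolynomial.aeval ![xx, RatFunc.X * xx] with hΦdef
  apply Set.eq_of_subset_of_subset
  · rintro u ⟨p, rfl⟩
    simp only [Set.mem_setOf_eq]
    induction p using MvPolynomial.induction_on with
    | C c =>
      refine ⟨C c, 0, by simp, ?_⟩
      simp [hΦdef, RatFunc.algebraMap_C, RatFunc.algebraMap_eq_C]
    | add p q hp hq =>
      obtain ⟨F1, d1, h1, e1⟩ := hp
      obtain ⟨F2, d2, h2, e2⟩ := hq
      refine ⟨F1 * π ^ d2 + F2 * π ^ d1, d1 + d2, ?_, ?_⟩
      · have b1 : (F1 * π ^ d2).natDegree ≤ F1.natDegree + d2 * 2 :=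
          le_trans natDegree_mul_le (by rw [natDegree_pow, hd])
        have b2 : (F2 * π ^ d1).natDegree ≤ F2.natDegree + d1 * 2 :=
          le_trans natDegree_mul_le (by rw [natDegree_pow, hd])
        have := natDegree_add_le (F1 * π ^ d2) (F2 * π ^ d1)
        omega
      · rw [map_add, e1, e2, div_add_div _ _ (pow_ne_zero d1 hπR0) (pow_ne_zero d2 hπR0),
          map_add, map_mul, map_mul, map_pow, map_pow, pow_add, ← hπRdef]
        ring_nf
    | mul_X p i hp =>
      obtain ⟨F, d, h1, e1⟩ := hp
      fin_cases i
      · refine ⟨F, d + 1, by omega, ?_⟩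
        rw [map_mul, e1]
        have hΦX : Φ (MvPolynomial.X ((fun i => i) ⟨0, by omega⟩)) = xx := by simp [hΦdef]
        rw [hΦX, hxx, ← div_eq_mul_inv, div_div, pow_succ]
      · refine ⟨F * X, d + 1, le_trans natDegree_mul_le (by simp [natDegree_X]; omega), ?_⟩
        rw [map_mul, e1]
        have hΦX : Φ (MvPolynomial.X ((fun i => i) ⟨1, by omega⟩)) = RatFunc.X * xx := by
          simp [hΦdef]
        rw [hΦX, map_mul, RatFunc.algebraMap_X, hxx, pow_succ]
        field_simp
        try ring
  · rintro u ⟨F, d, h1, rfl⟩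
    exact auxMem hm hd F.natDegree F d le_rfl h1

end Aux

/-- The coordinate ring of the `π`-truncated projective line: kernel and image of
the evaluation map `Φ : 𝔽_q[X,Y] → 𝔽_q(t)`, `X ↦ 1/π`, `Y ↦ t/π`. -/
theorem stmt0 {Fq E : Type*} [Field Fq] [Fintype Fq] [Field E] [Algebra Fq E]
    (q : ℕ) (hq : Fintype.card Fq = q)
    (ζ : E) (hζ : ζ ^ q ≠ ζ) (hζ2 : ζ ^ q ^ 2 = ζ)
    (a b : Fq) (ha : algebraMap Fq E a = ζ + ζ ^ q) (hb : algebraMap Fq E b = ζ ^ (q + 1)) :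
    let π : Polynomial Fq := Polynomial.X ^ 2 - Polynomial.C a * Polynomial.X + Polynomial.C b
    let x : RatFunc Fq := (algebraMap (Polynomial Fq) (RatFunc Fq) π)⁻¹
    let y : RatFunc Fq := RatFunc.X * x
    let Φ : MvPolynomial (Fin 2) Fq →ₐ[Fq] RatFunc Fq := MvPolynomial.aeval ![x, y]
    let ρ : MvPolynomial (Fin 2) Fq :=
      MvPolynomial.X 1 ^ 2 - MvPolynomial.C a * MvPolynomial.X 0 * MvPolynomial.X 1
        + MvPolynomial.C b * MvPolynomial.X 0 ^ 2 - MvPolynomial.X 0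
    RingHom.ker (Φ : MvPolynomial (Fin 2) Fq →+* RatFunc Fq) = Ideal.span {ρ} ∧
      Set.range Φ = {u : RatFunc Fq | ∃ (P : Polynomial Fq) (d : ℕ), P.natDegree ≤ 2 * d ∧
        u = algebraMap (Polynomial Fq) (RatFunc Fq) P /
          algebraMap (Polynomial Fq) (RatFunc Fq) π ^ d} ∧
      Nonempty ((MvPolynomial (Fin 2) Fq ⧸ Ideal.span {ρ}) ≃ₐ[Fq]
        Algebra.adjoin Fq ({x, y} : Set (RatFunc Fq))) := by
  intro π x y Φ ρ
  have hker : RingHom.ker (Φ : MvPolynomial (Fin 2) Fq →+* RatFunc Fq) = Ideal.span {ρ} :=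
    auxKer a b
  refine ⟨hker, auxRange (aux_monic a b) (aux_natDegree a b), ?_⟩
  have hrange : Φ.range = Algebra.adjoin Fq ({x, y} : Set (RatFunc Fq)) := by
    have h1 : Set.range ![x, y] = ({x, y} : Set (RatFunc Fq)) := by
      ext u
      constructor
      · rintro ⟨i, rfl⟩
        fin_cases i <;> simp
      · rintro (rfl | rfl)
        · exact ⟨0, rfl⟩
        · exact ⟨1, rfl⟩
    rw [← h1, Algebra.adjoin_range_eq_range_aeval]
  have hker2 : RingHom.ker Φ = Ideal.span {ρ} := hker
  exact ⟨((Ideal.quotientEquivAlgOfEq Fq hker2.symm).trans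
    (Ideal.quotientKerEquivRange Φ)).trans (Subalgebra.equivOfEq _ _ hrange)⟩
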